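/- Let w ∈ S_+ and i be such that Φ_i(w) = {w t_{i,j} : ℓ(w t_{i,j}) = ℓ(w)+1, j ∈ φ_i(w)} is nonempty. Then the Bruhat interval [w, ∨Φ_i(w)] equals {w} ∪ {w_{U,i} : ∅ ≠ U ⊆ φ_i(w)}, where ∨Φ_i(w) is the join of Φ_i(w). -/

import Mathlib

/-- Finitely supported permutations of `ℕ`: these model the group `S_+` of
permutations of the positive integers fixing all but finitely many points
(relabelled 0-based). -/
def fsupp (w : Equiv.Perm ℕ) : Prop := Set.Finite {x : ℕ | w x ≠ x}

/-- Coxeter length of a (finitely supported) permutation of `ℕ`: the number of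
inversions. -/
noncomputable def lenN (w : Equiv.Perm ℕ) : ℕ :=
  Set.ncard {p : ℕ × ℕ | p.1 < p.2 ∧ w p.2 < w p.1}

/-- `(a, w a)` is a neighbor of `(i, w i)` in the graph of `w`:
`i ≤ a`, `w i ≤ w a`, `(a, w a) ≠ (i, w i)`, and no other point of the graph of
`w` lies in the rectangle `[i,a] × [w i, w a]`. -/
def isNbrN (w : Equiv.Perm ℕ) (i a : ℕ) : Prop :=
  i ≤ a ∧ w i ≤ w a ∧ (a, w a) ≠ (i, w i) ∧
    ∀ a', i ≤ a' → a' ≤ a → w i ≤ w a' → w a' ≤ w a → a' = i ∨ a' = a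

/-- For `U = {i_1 < i_2 < ⋯ < i_k}`, the permutation
`w_{U,i} = w t_{i,i_k} t_{i,i_{k-1}} ⋯ t_{i,i_1}`. -/
def wUN (w : Equiv.Perm ℕ) (i : ℕ) (U : Finset ℕ) : Equiv.Perm ℕ :=
  ((U.sort (· ≤ ·)).reverse).foldl (fun v j => v * Equiv.swap i j) w

/-- Bruhat order on finitely supported permutations of `ℕ`: the
reflexive-transitive closure of the covering relation `u ⋖ u t_{a,b}` when
`ℓ(u t_{a,b}) = ℓ(u) + 1`. -/
def bruhatLEN (u v : Equiv.Perm ℕ) : Prop :=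
  Relation.ReflTransGen
    (fun x y => (∃ a b : ℕ, a ≠ b ∧ y = x * Equiv.swap a b) ∧ lenN y = lenN x + 1) u v

open Finset Equiv

/-- support bounded by N -/
def sbdd (N : ℕ) (u : Equiv.Perm ℕ) : Prop := ∀ x, N ≤ x → u x = x

lemma sbdd.lt {N : ℕ} {u : Equiv.Perm ℕ} (h : sbdd N u) {x : ℕ} (hx : x < N) : u x < N := by
  by_contra hc
  push_neg at hc
  have h2 := h (u x) hc
  have h3 := u.injective h2
  omega

lemma sbdd.mono {N M : ℕ} {u : Equiv.Perm ℕ} (h : sbdd N u) (hNM : N ≤ M) : sbdd M u :=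
  fun x hx => h x (le_trans hNM hx)

lemma fsupp_of_sbdd {N : ℕ} {u : Equiv.Perm ℕ} (h : sbdd N u) : fsupp u := by
  apply Set.Finite.subset (Set.finite_Iio N)
  intro x hx
  simp only [Set.mem_setOf_eq] at hx
  by_contra hc
  exact hx (h x (by simpa [Set.mem_Iio] using hc))

lemma fsupp.sbdd {u : Equiv.Perm ℕ} (h : fsupp u) : ∃ N, sbdd N u := by
  obtain ⟨M, hM⟩ := h.bddAbove
  exact ⟨M + 1, fun x hx => by
    by_contra hc
    have := hM (show x ∈ {x : ℕ | u x ≠ x} from hc)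
    omega⟩

lemma sbdd.mul_swap {N : ℕ} {u : Equiv.Perm ℕ} (h : sbdd N u) {a b : ℕ}
    (ha : a < N) (hb : b < N) : sbdd N (u * Equiv.swap a b) := by
  intro x hx
  have hxa : x ≠ a := by omega
  have hxb : x ≠ b := by omega
  simp [Equiv.Perm.mul_apply, Equiv.swap_apply_of_ne_of_ne hxa hxb, h x hx]

/-- inversions inside the box -/
noncomputable def invF (N : ℕ) (u : Equiv.Perm ℕ) : Finset (ℕ × ℕ) :=
  (Finset.range N ×ˢ Finset.range N).filter (fun p => p.1 < p.2 ∧ u p.2 < u p.1)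

lemma lenN_eq {N : ℕ} {u : Equiv.Perm ℕ} (h : sbdd N u) : lenN u = (invF N u).card := by
  rw [lenN, ← Set.ncard_coe_finset]
  congr 1
  ext ⟨p, q⟩
  simp only [Set.mem_setOf_eq, invF, Finset.coe_filter, Finset.mem_product, Finset.mem_range,
    Set.mem_setOf_eq, Finset.mem_coe]
  constructor
  · rintro ⟨hpq, hval⟩
    refine ⟨⟨?_, ?_⟩, hpq, hval⟩
    · by_contra hp
      push_neg at hp
      have hup : u p = p := h p hp
      have huq : u q = q := h q (by omega)
      omega
    · by_contra hq
      push_neg at hq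
      have huq : u q = q := h q hq
      have hp : p < N := by
        by_contra hp
        push_neg at hp
        have hup : u p = p := h p hp
        omega
      have := h.lt hp
      omega
  · rintro ⟨_, hpq, hval⟩
    exact ⟨hpq, hval⟩

lemma mem_invF {N : ℕ} {u : Equiv.Perm ℕ} {e : ℕ × ℕ} :
    e ∈ invF N u ↔ (e.1 < N ∧ e.2 < N) ∧ e.1 < e.2 ∧ u e.2 < u e.1 := by
  simp [invF, Finset.mem_filter, Finset.mem_product, Finset.mem_range]

section swaplen

def Gmap (a b : ℕ) (e : ℕ × ℕ) : ℕ × ℕ :=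
  if Equiv.swap a b e.1 < Equiv.swap a b e.2 then (Equiv.swap a b e.1, Equiv.swap a b e.2) else e

lemma swap_lt {N a b x : ℕ} (ha : a < N) (hb : b < N) (hx : x < N) : Equiv.swap a b x < N := by
  rw [Equiv.swap_apply_def]
  split_ifs <;> omega

lemma Gmap_invol {a b : ℕ} {e : ℕ × ℕ} (h : e.1 < e.2) : Gmap a b (Gmap a b e) = e := by
  unfold Gmap
  by_cases hc : Equiv.swap a b e.1 < Equiv.swap a b e.2
  · simp only [hc, if_pos, Equiv.swap_apply_self]
    simp [h]
  · simp [hc]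

lemma flip_classify {a b p q : ℕ} (hab : a < b) (hpq : p < q)
    (h : ¬ Equiv.swap a b p < Equiv.swap a b q) :
    (p = a ∧ q = b) ∨ (p = a ∧ a < q ∧ q < b) ∨ (q = b ∧ a < p ∧ p < b) := by
  rw [Equiv.swap_apply_def, Equiv.swap_apply_def] at h
  split_ifs at h <;> omega

/-- Gmap sends inversions of u (plus the new pair) into inversions of u * swap a b. -/
lemma Gmap_mem_invF {N : ℕ} {u : Equiv.Perm ℕ} {a b : ℕ} (ha : a < N) (hb : b < N)
    (hab : a < b) (hv : u a < u b) {e : ℕ × ℕ}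
    (he : e ∈ insert (a, b) (invF N u)) :
    Gmap a b e ∈ invF N (u * Equiv.swap a b) := by
  obtain ⟨p, q⟩ := e
  rw [Finset.mem_insert] at he
  rcases he with he | he
  · obtain ⟨h1, h2⟩ := Prod.ext_iff.mp he
    simp only at h1 h2
    rw [h1, h2]
    have hc : ¬ Equiv.swap a b a < Equiv.swap a b b := by
      rw [Equiv.swap_apply_left, Equiv.swap_apply_right]; omega
    rw [Gmap, if_neg hc, mem_invF]
    dsimp only
    refine ⟨⟨ha, hb⟩, hab, ?_⟩
    have e2 : (u * Equiv.swap a b) b = u a := by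
      rw [Equiv.Perm.mul_apply, Equiv.swap_apply_right]
    have e3 : (u * Equiv.swap a b) a = u b := by
      rw [Equiv.Perm.mul_apply, Equiv.swap_apply_left]
    omega
  · rw [mem_invF] at he
    dsimp only at he
    obtain ⟨⟨hpN, hqN⟩, hpq, hval⟩ := he
    by_cases hc : Equiv.swap a b p < Equiv.swap a b q
    · rw [Gmap, if_pos hc, mem_invF]
      dsimp only
      have e1 : (u * Equiv.swap a b) (Equiv.swap a b p) = u p := by
        simp [Equiv.Perm.mul_apply]
      have e2 : (u * Equiv.swap a b) (Equiv.swap a b q) = u q := by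
        simp [Equiv.Perm.mul_apply]
      exact ⟨⟨swap_lt ha hb hpN, swap_lt ha hb hqN⟩, hc, by rw [e1, e2]; exact hval⟩
    · rw [Gmap, if_neg hc, mem_invF]
      dsimp only
      refine ⟨⟨hpN, hqN⟩, hpq, ?_⟩
      rcases flip_classify hab hpq hc with ⟨hpa, hqb⟩ | ⟨hpa, hq1, hq2⟩ | ⟨hqb, hp1, hp2⟩
      · rw [hpa, hqb] at hval; omega
      · have e1 : (u * Equiv.swap a b) q = u q := by
          rw [Equiv.Perm.mul_apply, Equiv.swap_apply_of_ne_of_ne (by omega) (by omega)]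
        have e2 : (u * Equiv.swap a b) p = u b := by
          rw [Equiv.Perm.mul_apply, hpa, Equiv.swap_apply_left]
        rw [hpa] at hval
        omega
      · have e1 : (u * Equiv.swap a b) p = u p := by
          rw [Equiv.Perm.mul_apply, Equiv.swap_apply_of_ne_of_ne (by omega) (by omega)]
        have e2 : (u * Equiv.swap a b) q = u a := by
          rw [Equiv.Perm.mul_apply, hqb, Equiv.swap_apply_right]
        rw [hqb] at hval
        omega

end swaplen


lemma Gmap_mem_insert {N : ℕ} {u : Equiv.Perm ℕ} {a b : ℕ} (ha : a < N) (hb : b < N)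
    (hab : a < b)
    (hm : ∀ c, a < c → c < b → ¬(u a < u c ∧ u c < u b)) {e : ℕ × ℕ}
    (he : e ∈ invF N (u * Equiv.swap a b)) :
    Gmap a b e ∈ insert (a, b) (invF N u) := by
  obtain ⟨p, q⟩ := e
  rw [mem_invF] at he
  dsimp only at he
  obtain ⟨⟨hpN, hqN⟩, hpq, hval⟩ := he
  by_cases hc : Equiv.swap a b p < Equiv.swap a b q
  · rw [Gmap, if_pos hc]
    apply Finset.mem_insert_of_mem
    rw [mem_invF]
    dsimp only
    refine ⟨⟨swap_lt ha hb hpN, swap_lt ha hb hqN⟩, hc, ?_⟩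
    have evq : (u * Equiv.swap a b) q = u (Equiv.swap a b q) := rfl
    have evp : (u * Equiv.swap a b) p = u (Equiv.swap a b p) := rfl
    rw [← evp, ← evq]; exact hval
  · rw [Gmap, if_neg hc]
    rcases flip_classify hab hpq hc with ⟨hpa, hqb⟩ | ⟨hpa, hq1, hq2⟩ | ⟨hqb, hp1, hp2⟩
    · rw [hpa, hqb]; exact Finset.mem_insert_self _ _
    · apply Finset.mem_insert_of_mem
      rw [mem_invF]
      dsimp only
      refine ⟨⟨hpN, hqN⟩, hpq, ?_⟩
      have e1 : (u * Equiv.swap a b) q = u q := by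
        rw [Equiv.Perm.mul_apply, Equiv.swap_apply_of_ne_of_ne (by omega) (by omega)]
      have e2 : (u * Equiv.swap a b) p = u b := by
        rw [Equiv.Perm.mul_apply, hpa, Equiv.swap_apply_left]
      have huq : u q < u b := by omega
      have hne : u q ≠ u a := fun h => by have := u.injective h; omega
      have := hm q hq1 hq2
      rw [hpa]
      omega
    · apply Finset.mem_insert_of_mem
      rw [mem_invF]
      dsimp only
      refine ⟨⟨hpN, hqN⟩, hpq, ?_⟩
      have e1 : (u * Equiv.swap a b) p = u p := by
        rw [Equiv.Perm.mul_apply, Equiv.swap_apply_of_ne_of_ne (by omega) (by omega)]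
      have e2 : (u * Equiv.swap a b) q = u a := by
        rw [Equiv.Perm.mul_apply, hqb, Equiv.swap_apply_right]
      have hup : u a < u p := by omega
      have hne : u p ≠ u b := fun h => by have := u.injective h; omega
      have := hm p hp1 hp2
      rw [hqb]
      omega

lemma fst_lt_snd_of_mem_insert {N : ℕ} {u : Equiv.Perm ℕ} {a b : ℕ} (hab : a < b)
    {e : ℕ × ℕ} (he : e ∈ insert (a, b) (invF N u)) : e.1 < e.2 := by
  rcases Finset.mem_insert.mp he with he | he
  · rw [he]; exact hab
  · exact (mem_invF.mp he).2.1

lemma lenN_mul_swap_cover {N : ℕ} {u : Equiv.Perm ℕ} {a b : ℕ} (hs : sbdd N u)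
    (hab : a < b) (hb : b < N) (hv : u a < u b)
    (hm : ∀ c, a < c → c < b → ¬(u a < u c ∧ u c < u b)) :
    lenN (u * Equiv.swap a b) = lenN u + 1 := by
  have ha : a < N := lt_trans hab hb
  rw [lenN_eq (hs.mul_swap ha hb), lenN_eq hs]
  have hnot : (a, b) ∉ invF N u := by
    rw [mem_invF]
    dsimp only
    rintro ⟨-, -, h⟩
    omega
  rw [← Finset.card_insert_of_notMem hnot]
  apply Finset.card_bij' (fun e _ => Gmap a b e) (fun e _ => Gmap a b e)
  · intro e he
    exact Gmap_mem_insert ha hb hab hm he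
  · intro e he
    exact Gmap_mem_invF ha hb hab hv he
  · intro e he
    exact Gmap_invol (mem_invF.mp he).2.1
  · intro e he
    exact Gmap_invol (fst_lt_snd_of_mem_insert hab he)

lemma lenN_mul_swap_le {N : ℕ} {u : Equiv.Perm ℕ} {a b : ℕ} (hs : sbdd N u)
    (hab : a < b) (hb : b < N) (hv : u a < u b) :
    lenN u + 1 ≤ lenN (u * Equiv.swap a b) := by
  have ha : a < N := lt_trans hab hb
  rw [lenN_eq (hs.mul_swap ha hb), lenN_eq hs]
  have hnot : (a, b) ∉ invF N u := by
    rw [mem_invF]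
    dsimp only
    rintro ⟨-, -, h⟩
    omega
  rw [← Finset.card_insert_of_notMem hnot]
  apply Finset.card_le_card_of_injOn (fun e => Gmap a b e)
  · intro e he
    exact Gmap_mem_invF ha hb hab hv he
  · intro e he e' he' heq
    have h1 := Gmap_invol (a := a) (b := b) (fst_lt_snd_of_mem_insert hab (Finset.mem_coe.mp he))
    have h2 := Gmap_invol (a := a) (b := b) (fst_lt_snd_of_mem_insert hab (Finset.mem_coe.mp he'))
    rw [← h1, ← h2]
    exact congrArg (Gmap a b) heq

lemma cover_values {N : ℕ} {u : Equiv.Perm ℕ} {a b : ℕ} (hs : sbdd N u)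
    (hab : a < b) (hb : b < N)
    (hlen : lenN (u * Equiv.swap a b) = lenN u + 1) : u a < u b := by
  have ha : a < N := lt_trans hab hb
  by_contra hc
  push_neg at hc
  have hne : u b ≠ u a := fun h => by have := u.injective h; omega
  have h2 : (u * Equiv.swap a b) a < (u * Equiv.swap a b) b := by
    have e1 : (u * Equiv.swap a b) a = u b := by
      rw [Equiv.Perm.mul_apply, Equiv.swap_apply_left]
    have e2 : (u * Equiv.swap a b) b = u a := by
      rw [Equiv.Perm.mul_apply, Equiv.swap_apply_right]
    omega
  have h3 := lenN_mul_swap_le (hs.mul_swap ha hb) hab hb h2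
  have h4 : u * Equiv.swap a b * Equiv.swap a b = u := by
    rw [mul_assoc, Equiv.swap_mul_self, mul_one]
  rw [h4, hlen] at h3
  omega

/-! ### the dominance function dm -/

def dm (u : Equiv.Perm ℕ) (p q : ℕ) : ℕ := ((Finset.range p).filter (fun x => q ≤ u x)).card

lemma dm_succ (u : Equiv.Perm ℕ) (p q : ℕ) :
    dm u (p + 1) q = dm u p q + (if q ≤ u p then 1 else 0) := by
  rw [dm, dm, Finset.range_add_one, Finset.filter_insert]
  split_ifs with h
  · rw [Finset.card_insert_of_notMem (fun hc => by simp at hc)]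
  · omega

lemma dm_congr_prefix {u v : Equiv.Perm ℕ} {p : ℕ} (h : ∀ x < p, u x = v x) (q : ℕ) :
    dm u p q = dm v p q := by
  unfold dm
  congr 1
  apply Finset.filter_congr
  intro x hx
  rw [h x (Finset.mem_range.mp hx)]

lemma dm_split (u : Equiv.Perm ℕ) {l p : ℕ} (hlp : l ≤ p) (q : ℕ) :
    dm u p q = dm u l q + ((Finset.Ico l p).filter (fun x => q ≤ u x)).card := by
  have hsplit : Finset.range p = Finset.range l ∪ Finset.Ico l p := by
    rw [Finset.range_eq_Ico, Finset.range_eq_Ico,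
      Finset.Ico_union_Ico_eq_Ico (Nat.zero_le l) hlp]
  have hdisj : Disjoint ((Finset.range l).filter (fun x => q ≤ u x))
      ((Finset.Ico l p).filter (fun x => q ≤ u x)) := by
    rw [Finset.disjoint_left]
    intro x hx hx'
    have h1 := Finset.mem_range.mp (Finset.mem_filter.mp hx).1
    have h2 := Finset.mem_Ico.mp (Finset.mem_filter.mp hx').1
    omega
  rw [dm, dm, hsplit, Finset.filter_union, Finset.card_union_of_disjoint hdisj]

lemma dm_mul_swap {u : Equiv.Perm ℕ} {a b : ℕ} (hab : a < b) (hv : u a < u b) (p q : ℕ) :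
    dm (u * Equiv.swap a b) p q
      = dm u p q + (if a < p ∧ p ≤ b ∧ u a < q ∧ q ≤ u b then 1 else 0) := by
  by_cases hap : a < p
  swap
  · have h0 : dm (u * Equiv.swap a b) p q = dm u p q := by
      apply dm_congr_prefix
      intro x hx
      rw [Equiv.Perm.mul_apply, Equiv.swap_apply_of_ne_of_ne (by omega) (by omega)]
    rw [h0, if_neg (by omega)]
    omega
  rcases Nat.lt_or_ge b p with hbp | hpb
  · -- both a b < p : counts equal
    have h0 : dm (u * Equiv.swap a b) p q = dm u p q := by
      rw [dm, dm, Finset.card_filter, Finset.card_filter]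
      apply Finset.sum_nbij' (fun x => Equiv.swap a b x) (fun x => Equiv.swap a b x)
      · intro x hx
        rw [Finset.mem_range] at hx ⊢
        rw [Equiv.swap_apply_def]; split_ifs <;> omega
      · intro x hx
        rw [Finset.mem_range] at hx ⊢
        rw [Equiv.swap_apply_def]; split_ifs <;> omega
      · intro x _; exact Equiv.swap_apply_self _ _ _
      · intro x _; exact Equiv.swap_apply_self _ _ _
      · intro x _
        simp [Equiv.Perm.mul_apply]
        exact if_congr Iff.rfl rfl rfl
    rw [h0, if_neg (by omega)]
    omega
  · -- a < p ≤ b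
    have key : ∀ w : Equiv.Perm ℕ, dm w p q
        = (if q ≤ w a then 1 else 0) + ((Finset.Ico (a+1) p).filter (fun x => q ≤ w x)).card
        + ((Finset.range a).filter (fun x => q ≤ w x)).card := by
      intro w
      rw [dm_split w (show a ≤ p by omega) q]
      have hins : Finset.Ico a p = insert a (Finset.Ico (a+1) p) := by
        rw [Finset.insert_Ico_add_one_left_eq_Ico hap]
      rw [hins, Finset.filter_insert]
      split_ifs with h
      · rw [Finset.card_insert_of_notMem (fun hc => by
          have := Finset.mem_Ico.mp (Finset.mem_filter.mp hc).1; omega)]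
        rw [dm]; omega
      · rw [dm]; omega
    rw [key, key]
    have e1 : (u * Equiv.swap a b) a = u b := by
      rw [Equiv.Perm.mul_apply, Equiv.swap_apply_left]
    have e2 : ((Finset.Ico (a+1) p).filter (fun x => q ≤ (u * Equiv.swap a b) x)).card
        = ((Finset.Ico (a+1) p).filter (fun x => q ≤ u x)).card := by
      congr 1
      apply Finset.filter_congr
      intro x hx
      have hx' := Finset.mem_Ico.mp hx
      rw [Equiv.Perm.mul_apply, Equiv.swap_apply_of_ne_of_ne (by omega) (by omega)]
    have e3 : ((Finset.range a).filter (fun x => q ≤ (u * Equiv.swap a b) x)).card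
        = ((Finset.range a).filter (fun x => q ≤ u x)).card := by
      congr 1
      apply Finset.filter_congr
      intro x hx
      have hx' := Finset.mem_range.mp hx
      rw [Equiv.Perm.mul_apply, Equiv.swap_apply_of_ne_of_ne (by omega) (by omega)]
    rw [e1, e2, e3]
    split_ifs <;> omega

lemma fsupp_mul_swap {u : Equiv.Perm ℕ} (hu : fsupp u) (a b : ℕ) :
    fsupp (u * Equiv.swap a b) := by
  obtain ⟨N, hN⟩ := hu.sbdd
  exact fsupp_of_sbdd ((hN.mono (le_max_left N (max a b + 1))).mul_swap
    (by omega) (by omega))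

lemma fsupp_bruhat {u v : Equiv.Perm ℕ} (h : bruhatLEN u v) (hu : fsupp u) : fsupp v := by
  induction h with
  | refl => exact hu
  | tail _ h2 ih =>
    obtain ⟨⟨a, b, _, rfl⟩, _⟩ := h2
    exact fsupp_mul_swap ih a b

/-- A covering step increases dm pointwise. -/
lemma cover_dm_le {x : Equiv.Perm ℕ} (hx : fsupp x) {a b : ℕ} (hab : a ≠ b)
    (hlen : lenN (x * Equiv.swap a b) = lenN x + 1) (p q : ℕ) :
    dm x p q ≤ dm (x * Equiv.swap a b) p q := by
  obtain ⟨N0, hN0⟩ := hx.sbdd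
  rcases Nat.lt_or_ge a b with h1 | h2
  · have hs : sbdd (max N0 (b+1)) x := hN0.mono (le_max_left _ _)
    have hv := cover_values hs h1 (by omega) hlen
    rw [dm_mul_swap h1 hv p q]
    omega
  · have h1 : b < a := by omega
    have hsw : Equiv.swap a b = Equiv.swap b a := Equiv.swap_comm a b
    rw [hsw] at hlen ⊢
    have hs : sbdd (max N0 (a+1)) x := hN0.mono (le_max_left _ _)
    have hv := cover_values hs h1 (by omega) hlen
    rw [dm_mul_swap h1 hv p q]
    omega

lemma bruhat_dm_le {u v : Equiv.Perm ℕ} (hu : fsupp u) (h : bruhatLEN u v) (p q : ℕ) :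
    dm u p q ≤ dm v p q := by
  induction h with
  | refl => exact le_refl _
  | tail h1 h2 ih =>
    obtain ⟨⟨a, b, hab, rfl⟩, hlen⟩ := h2
    exact le_trans ih (cover_dm_le (fsupp_bruhat h1 hu) hab hlen p q)

/-! ### the hard direction -/

noncomputable def msr (N : ℕ) (u v : Equiv.Perm ℕ) : ℕ :=
  ∑ e ∈ Finset.range N ×ˢ Finset.range N, (dm v e.1 e.2 - dm u e.1 e.2)

lemma dcrit {N : ℕ} : ∀ m, ∀ u v : Equiv.Perm ℕ, sbdd N u → sbdd N v →
    (∀ p q, dm u p q ≤ dm v p q) → msr N u v ≤ m → bruhatLEN u v := by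
  intro m
  induction m using Nat.strong_induction_on with
  | _ m ih =>
  intro u v hsu hsv hle hm
  by_cases heq : u = v
  · subst heq; exact Relation.ReflTransGen.refl
  have hex : ∃ p, u p ≠ v p := by
    by_contra h
    push_neg at h
    exact heq (Equiv.ext h)
  obtain ⟨a, ha_ne, ha_min⟩ : ∃ a, u a ≠ v a ∧ (∀ x, x < a → u x = v x) := by
    refine ⟨Nat.find hex, Nat.find_spec hex, fun x hx => ?_⟩
    have := Nat.find_min hex hx
    push_neg at this
    exact this
  have haN : a < N := by
    by_contra hc
    push_neg at hc
    exact ha_ne ((hsu a hc).trans (hsv a hc).symm)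
  have hprefix : ∀ q, dm u a q = dm v a q := fun q => dm_congr_prefix ha_min q
  have hua_lt : u a < v a := by
    by_contra hc
    push_neg at hc
    have hlt : v a < u a := lt_of_le_of_ne hc ha_ne.symm
    have h1 := hle (a+1) (u a)
    rw [dm_succ, dm_succ, if_pos (le_refl _), if_neg (by omega), hprefix] at h1
    omega
  have hbex : ∃ x, a < x ∧ u a < u x ∧ u x ≤ v a := by
    refine ⟨u.symm (v a), ?_, ?_, ?_⟩
    · rcases Nat.lt_trichotomy (u.symm (v a)) a with h | h | h
      · exfalso
        have h2 : u (u.symm (v a)) = v (u.symm (v a)) := ha_min _ h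
        rw [Equiv.apply_symm_apply] at h2
        have := v.injective h2.symm
        omega
      · exfalso
        have : u (u.symm (v a)) = v a := Equiv.apply_symm_apply u (v a)
        rw [h] at this
        exact ha_ne this
      · exact h
    · rw [Equiv.apply_symm_apply]; exact hua_lt
    · rw [Equiv.apply_symm_apply]
  obtain ⟨b, ⟨hab, hvab, hbva⟩, hbmin⟩ : ∃ b, (a < b ∧ u a < u b ∧ u b ≤ v a) ∧
      ∀ x, a < x → u a < u x → u x ≤ v a → b ≤ x :=
    ⟨Nat.find hbex, Nat.find_spec hbex, fun x h1 h2 h3 => Nat.find_min' hbex ⟨h1, h2, h3⟩⟩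
  have hvaN : v a < N := hsv.lt haN
  have hbN : b < N := by
    by_contra hc
    push_neg at hc
    have := hsu b hc
    omega
  have hmid : ∀ c, a < c → c < b → ¬(u a < u c ∧ u c < u b) := by
    rintro c h1 h2 ⟨m1, m2⟩
    have := hbmin c h1 m1 (by omega)
    omega
  have hcov := lenN_mul_swap_cover hsu hab hbN hvab hmid
  have hstep : bruhatLEN u (u * Equiv.swap a b) :=
    Relation.ReflTransGen.single ⟨⟨a, b, Nat.ne_of_lt hab, rfl⟩, hcov⟩
  have hstrict : ∀ p q, a < p → p ≤ b → u a < q → q ≤ u b → dm u p q < dm v p q := by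
    intro p q h1 h2 h3 h4
    by_contra hcon
    push_neg at hcon
    have hq_le_va : q ≤ v a := le_trans h4 hbva
    have hins : Finset.Ico a p = insert a (Finset.Ico (a+1) p) := by
      rw [Finset.insert_Ico_add_one_left_eq_Ico h1]
    have key : ∀ w : Equiv.Perm ℕ, ∀ r : ℕ, dm w p r
        = dm w a r + (if r ≤ w a then 1 else 0)
          + ((Finset.Ico (a+1) p).filter (fun x => r ≤ w x)).card := by
      intro w r
      rw [dm_split w (show a ≤ p by omega) r, hins, Finset.filter_insert]
      split_ifs with h
      · rw [Finset.card_insert_of_notMem (fun hc => by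
          have := Finset.mem_Ico.mp (Finset.mem_filter.mp hc).1; omega)]
        omega
      · omega
    set Su := ((Finset.Ico (a+1) p).filter (fun x => q ≤ u x)).card with hSu
    set Sv := ((Finset.Ico (a+1) p).filter (fun x => q ≤ v x)).card with hSv
    set q' := v a + 1 with hq'
    set Su' := ((Finset.Ico (a+1) p).filter (fun x => q' ≤ u x)).card with hSu'
    set Sv' := ((Finset.Ico (a+1) p).filter (fun x => q' ≤ v x)).card with hSv'
    have hSuSu' : Su ≤ Su' := by
      apply Finset.card_le_card
      intro x hx
      rw [Finset.mem_filter] at hx ⊢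
      obtain ⟨hx1, hx2⟩ := hx
      refine ⟨hx1, ?_⟩
      have hx3 := Finset.mem_Ico.mp hx1
      have hxb : x < b := by omega
      by_contra hc
      push_neg at hc
      have := hbmin x (by omega) (by omega) (by omega)
      omega
    have hSv'Sv : Sv' ≤ Sv := by
      apply Finset.card_le_card
      intro x hx
      rw [Finset.mem_filter] at hx ⊢
      exact ⟨hx.1, by have := hx.2; omega⟩
    have e1 := key u q
    have e2 := key v q
    have e3 := key u q'
    have e4 := key v q'
    rw [if_neg (by omega)] at e1
    rw [if_pos (by omega)] at e2
    rw [if_neg (by omega)] at e3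
    rw [if_neg (by omega)] at e4
    have hp1 := hprefix q
    have hp2 := hprefix q'
    have hfin := hle p q'
    omega
  have hle' : ∀ p q, dm (u * Equiv.swap a b) p q ≤ dm v p q := by
    intro p q
    rw [dm_mul_swap hab hvab p q]
    split_ifs with h
    · exact hstrict p q h.1 h.2.1 h.2.2.1 h.2.2.2
    · have := hle p q; omega
  have hmsr : msr N (u * Equiv.swap a b) v < msr N u v := by
    apply Finset.sum_lt_sum
    · intro e _
      have h1 := dm_mul_swap hab hvab e.1 e.2
      have h2 := hle' e.1 e.2
      omega
    · refine ⟨(b, u b), Finset.mem_product.mpr ⟨Finset.mem_range.mpr hbN,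
        Finset.mem_range.mpr (by omega)⟩, ?_⟩
      have h1 := dm_mul_swap hab hvab b (u b)
      rw [if_pos ⟨hab, le_refl b, hvab, le_refl _⟩] at h1
      have h2 := hle' b (u b)
      dsimp only
      omega
  exact hstep.trans (ih (msr N (u * Equiv.swap a b) v) (by omega) _ v
    (hsu.mul_swap haN hbN) hsv hle' (le_refl _))

/-! ### neighbours -/

section nbr
variable {w : Equiv.Perm ℕ} {i : ℕ}

lemma nbr_lt {a : ℕ} (h : isNbrN w i a) : i < a ∧ w i < w a := by
  obtain ⟨h1, h2, h3, _⟩ := h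
  have hia : a ≠ i := by
    intro hc
    exact h3 (by rw [hc])
  have hwa : w a ≠ w i := fun hc => hia (w.injective hc)
  omega

lemma nbr_anti {a b : ℕ} (ha : isNbrN w i a) (hb : isNbrN w i b) (hab : a < b) :
    w b < w a := by
  by_contra hc
  push_neg at hc
  have h1 := nbr_lt ha
  rcases hb.2.2.2 a ha.1 (le_of_lt hab) ha.2.1 hc with h | h <;> omega

lemma nbr_dom : ∀ n : ℕ, ∀ x, (x - i) + (w x - w i) ≤ n → i ≤ x → w i ≤ w x → x ≠ i →
    ∃ a, isNbrN w i a ∧ a ≤ x ∧ w a ≤ w x := by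
  intro n
  induction n with
  | zero => intro x h1 h2 h3 h4; omega
  | succ n ih =>
    intro x h1 h2 h3 h4
    by_cases hx : isNbrN w i x
    · exact ⟨x, hx, le_refl _, le_refl _⟩
    · have hpair : (x, w x) ≠ (i, w i) := fun hc => h4 (congrArg Prod.fst hc)
      have hD : ¬ ∀ a', i ≤ a' → a' ≤ x → w i ≤ w a' → w a' ≤ w x → a' = i ∨ a' = x :=
        fun hD => hx ⟨h2, h3, hpair, hD⟩
      push_neg at hD
      obtain ⟨a', h_ia', h_a'x, h_wia', h_wa'x, hne1, hne2⟩ := hD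
      have hwa'x : w a' ≠ w x := fun hc => hne2 (w.injective hc)
      have hmeas : (a' - i) + (w a' - w i) ≤ n := by omega
      obtain ⟨a, ha, hax, hwa⟩ := ih a' hmeas h_ia' h_wia' hne1
      exact ⟨a, ha, by omega, by omega⟩

lemma nbr_above {x : ℕ} (hix : i < x) (hnx : ¬ isNbrN w i x) (hwx : w i ≤ w x) :
    ∀ u, isNbrN w i u → x ≤ u → w u < w x := by
  intro u hu hxu
  obtain ⟨a, ha, hax, hwa⟩ := nbr_dom ((x - i) + (w x - w i)) x (le_refl _)
    (le_of_lt hix) hwx (by omega)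
  have hax' : a < x := lt_of_le_of_ne hax (fun hc => hnx (hc ▸ ha))
  have hau : a < u := lt_of_lt_of_le hax' hxu
  have := nbr_anti ha hu hau
  have hwax : w a ≠ w x := fun hc => (by omega : a ≠ x) (w.injective hc)
  omega

lemma nbr_bound {N : ℕ} (hs : sbdd N w) (hiN : i < N) {a : ℕ} (ha : isNbrN w i a) :
    a < max N (w i) + 2 := by
  by_contra hc
  push_neg at hc
  set c := max N (w i) with hc_def
  have h1 : w (c + 1) = c + 1 := hs _ (by omega)
  have h2 : w a = a := hs _ (by omega)
  have h3 := nbr_lt ha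
  rcases ha.2.2.2 (c + 1) (by omega) (by omega) (by omega) (by omega) with h | h <;> omega

end nbr

/-! ### the fold rL -/

def rL (w : Equiv.Perm ℕ) (i : ℕ) (L : List ℕ) : Equiv.Perm ℕ :=
  L.reverse.foldl (fun v j => v * Equiv.swap i j) w

@[simp] lemma rL_nil {w : Equiv.Perm ℕ} {i : ℕ} : rL w i [] = w := rfl

lemma rL_cons {w : Equiv.Perm ℕ} {i u : ℕ} {T : List ℕ} :
    rL w i (u :: T) = rL w i T * Equiv.swap i u := by
  unfold rL
  rw [List.reverse_cons, List.foldl_append]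
  rfl

lemma rL_apply_of_ne {w : Equiv.Perm ℕ} {i : ℕ} {L : List ℕ} {x : ℕ}
    (hxi : x ≠ i) (hxL : x ∉ L) : rL w i L x = w x := by
  induction L with
  | nil => rfl
  | cons u T ih =>
    have hxu : x ≠ u := fun hc => hxL (hc ▸ List.mem_cons_self)
    rw [rL_cons, Equiv.Perm.mul_apply, Equiv.swap_apply_of_ne_of_ne hxi hxu]
    exact ih (fun hc => hxL (List.mem_cons_of_mem u hc))

lemma rL_apply_i {w : Equiv.Perm ℕ} {i u : ℕ} {T : List ℕ}
    (hui : u ≠ i) (huT : u ∉ T) : rL w i (u :: T) i = w u := by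
  rw [rL_cons, Equiv.Perm.mul_apply, Equiv.swap_apply_left]
  exact rL_apply_of_ne hui huT

/-- packaged hypotheses: a strictly sorted list of neighbours -/
def nice (w : Equiv.Perm ℕ) (i : ℕ) (L : List ℕ) : Prop :=
  L.Pairwise (· < ·) ∧ ∀ x ∈ L, isNbrN w i x

lemma nice_tail {w : Equiv.Perm ℕ} {i u : ℕ} {T : List ℕ} (h : nice w i (u :: T)) :
    nice w i T :=
  ⟨(List.pairwise_cons.mp h.1).2, fun x hx => h.2 x (List.mem_cons_of_mem u hx)⟩

lemma nice_head {w : Equiv.Perm ℕ} {i u : ℕ} {T : List ℕ} (h : nice w i (u :: T)) :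
    isNbrN w i u ∧ i < u ∧ (∀ x ∈ T, u < x ∧ w x < w u) ∧ u ∉ T := by
  have hu : isNbrN w i u := h.2 u (List.mem_cons_self)
  have hlt := (List.pairwise_cons.mp h.1).1
  have hx : ∀ x ∈ T, u < x ∧ w x < w u := fun x hx =>
    ⟨hlt x hx, nbr_anti hu (h.2 x (List.mem_cons_of_mem u hx)) (hlt x hx)⟩
  exact ⟨hu, (nbr_lt hu).1, hx, fun hc => by have := (hx u hc).1; omega⟩

lemma rL_sbdd {w : Equiv.Perm ℕ} {i N : ℕ} {L : List ℕ} (hs : sbdd N w) (hiN : i < N)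
    (hLN : ∀ x ∈ L, x < N) : sbdd N (rL w i L) := by
  induction L with
  | nil => exact hs
  | cons u T ih =>
    rw [rL_cons]
    exact (ih (fun x hx => hLN x (List.mem_cons_of_mem u hx))).mul_swap hiN
      (hLN u (List.mem_cons_self))

open scoped Classical in
noncomputable def eL (w : Equiv.Perm ℕ) (i : ℕ) (L : List ℕ) (p q : ℕ) : ℕ :=
  if i < p ∧ w i < q ∧ ∃ u ∈ L, p ≤ u ∧ q ≤ w u then 1 else 0

lemma eL_mono {w : Equiv.Perm ℕ} {i : ℕ} {L L' : List ℕ} (h : ∀ x ∈ L, x ∈ L')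
    (p q : ℕ) : eL w i L p q ≤ eL w i L' p q := by
  unfold eL
  split_ifs with h1 h2
  · omega
  · exfalso
    obtain ⟨ha, hb, u, hu, hc⟩ := h1
    exact h2 ⟨ha, hb, u, h u hu, hc⟩
  all_goals omega

lemma exists_val_iff {w : Equiv.Perm ℕ} {i u : ℕ} {T : List ℕ} (hn : nice w i (u :: T))
    {p q : ℕ} (hpu : p ≤ u) :
    (∃ v ∈ u :: T, p ≤ v ∧ q ≤ w v) ↔ q ≤ w u := by
  obtain ⟨hu, hiu, hT, huT⟩ := nice_head hn
  constructor
  · rintro ⟨v, hv, -, h2⟩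
    rcases List.mem_cons.mp hv with rfl | hv
    · exact h2
    · have := (hT v hv).2; omega
  · intro h
    exact ⟨u, List.mem_cons_self, hpu, h⟩

lemma rL_tail_i_lt {w : Equiv.Perm ℕ} {i u : ℕ} {T : List ℕ} (hn : nice w i (u :: T)) :
    rL w i T i < w u ∧ w i ≤ rL w i T i := by
  obtain ⟨hu, hiu, hT, huT⟩ := nice_head hn
  cases T with
  | nil =>
    rw [rL_nil]
    exact ⟨(nbr_lt hu).2, le_refl _⟩
  | cons t T' =>
    obtain ⟨ht, hit, hT', htT'⟩ := nice_head (nice_tail hn)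
    have hti : t ≠ i := by omega
    rw [rL_apply_i hti htT']
    have h1 := (hT t (List.mem_cons_self)).2
    have h2 := (nbr_lt ht).2
    omega

lemma dm_rL {w : Equiv.Perm ℕ} {i : ℕ} {L : List ℕ} (hn : nice w i L) (p q : ℕ) :
    dm (rL w i L) p q = dm w p q + eL w i L p q := by
  induction L with
  | nil => simp [eL]
  | cons u T ih =>
    obtain ⟨hu, hiu, hT, huT⟩ := nice_head hn
    have hxu : rL w i T u = w u := rL_apply_of_ne (by omega) huT
    obtain ⟨hlt, hge⟩ := rL_tail_i_lt hn
    have hval : rL w i T i < rL w i T u := by omega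
    rw [rL_cons, dm_mul_swap hiu hval p q, ih (nice_tail hn), hxu]
    have hgoal : eL w i (u :: T) p q = eL w i T p q +
        (if i < p ∧ p ≤ u ∧ rL w i T i < q ∧ q ≤ w u then 1 else 0) := by
      by_cases hpu : p ≤ u
      · have h1 : eL w i (u :: T) p q = if i < p ∧ w i < q ∧ q ≤ w u then 1 else 0 := by
          unfold eL
          refine if_congr ?_ rfl rfl
          rw [exists_val_iff hn hpu]
        cases T with
        | nil =>
          rw [h1]
          have h2 : eL w i ([] : List ℕ) p q = 0 := by simp [eL]
          rw [h2, rL_nil]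
          split_ifs <;> omega
        | cons t T' =>
          have hnt := nice_tail hn
          obtain ⟨ht, hit, hT', htT'⟩ := nice_head hnt
          have hpt : p ≤ t := le_trans hpu (le_of_lt (hT t (List.mem_cons_self)).1)
          have h2 : eL w i (t :: T') p q = if i < p ∧ w i < q ∧ q ≤ w t then 1 else 0 := by
            unfold eL
            refine if_congr ?_ rfl rfl
            rw [exists_val_iff hnt hpt]
          have h3 : rL w i (t :: T') i = w t := rL_apply_i (by omega) htT'
          rw [h1, h2, h3]
          have h4 := (hT t (List.mem_cons_self)).2
          have h5 := (nbr_lt ht).2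
          split_ifs <;> omega
      · have h0 : (if i < p ∧ p ≤ u ∧ rL w i T i < q ∧ q ≤ w u then 1 else 0) = 0 := by
          rw [if_neg]; omega
        rw [h0]
        have h1 : eL w i (u :: T) p q = eL w i T p q := by
          unfold eL
          refine if_congr ?_ rfl rfl
          constructor
          · rintro ⟨ha, hb, v, hv, hc, hd⟩
            rcases List.mem_cons.mp hv with rfl | hv
            · omega
            · exact ⟨ha, hb, v, hv, hc, hd⟩
          · rintro ⟨ha, hb, v, hv, hc, hd⟩
            exact ⟨ha, hb, v, List.mem_cons_of_mem u hv, hc, hd⟩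
        rw [h1]
        omega
    omega

lemma rL_chain {w : Equiv.Perm ℕ} {i N : ℕ} {L : List ℕ} (hs : sbdd N w) (hiN : i < N)
    (hn : nice w i L) (hLN : ∀ x ∈ L, x < N) : bruhatLEN w (rL w i L) := by
  induction L with
  | nil => exact Relation.ReflTransGen.refl
  | cons u T ih =>
    obtain ⟨hu, hiu, hT, huT⟩ := nice_head hn
    have hTN : ∀ x ∈ T, x < N := fun x hx => hLN x (List.mem_cons_of_mem u hx)
    have huN : u < N := hLN u (List.mem_cons_self)
    have hsT : sbdd N (rL w i T) := rL_sbdd hs hiN hTN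
    have hxu : rL w i T u = w u := rL_apply_of_ne (by omega) huT
    obtain ⟨hlt, hge⟩ := rL_tail_i_lt hn
    have hval : rL w i T i < rL w i T u := by omega
    have hmid : ∀ c, i < c → c < u → ¬(rL w i T i < rL w i T c ∧ rL w i T c < rL w i T u) := by
      rintro c h1 h2 ⟨m1, m2⟩
      have hcT : c ∉ T := fun hc => by have := (hT c hc).1; omega
      have hcc : rL w i T c = w c := rL_apply_of_ne (by omega) hcT
      rw [hcc, hxu] at m2
      rw [hcc] at m1
      have hwic : w i < w c := by omega
      rcases hu.2.2.2 c (by omega) (by omega) (by omega) (by omega) with h | h <;> omega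
    have hcov := lenN_mul_swap_cover hsT hiu huN hval hmid
    refine Relation.ReflTransGen.tail (ih (nice_tail hn) hTN) ?_
    rw [rL_cons]
    exact ⟨⟨i, u, by omega, rfl⟩, hcov⟩

/-! ### wUN and the classification -/

lemma wUN_eq_rL (w : Equiv.Perm ℕ) (i : ℕ) (U : Finset ℕ) :
    wUN w i U = rL w i (U.sort (· ≤ ·)) := rfl

lemma wUN_empty (w : Equiv.Perm ℕ) (i : ℕ) : wUN w i ∅ = w := by
  rw [wUN_eq_rL, Finset.sort_empty, rL_nil]

lemma wUN_insert {w : Equiv.Perm ℕ} {i u : ℕ} {U : Finset ℕ} (h1 : ∀ x ∈ U, u < x)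
    (h2 : u ∉ U) : wUN w i (insert u U) = wUN w i U * Equiv.swap i u := by
  rw [wUN_eq_rL, wUN_eq_rL, Finset.sort_insert (· ≤ ·) (fun b hb => le_of_lt (h1 b hb)) h2,
    rL_cons]

lemma cyc {w : Equiv.Perm ℕ} {i : ℕ} : ∀ (L : List ℕ) (z : Equiv.Perm ℕ),
    nice w i L → (∀ x, x ≠ i → x ∉ L → z x = w x) → (∀ u ∈ L, z u ≤ w u) →
    ∃ U : Finset ℕ, (∀ x ∈ U, x ∈ L) ∧ z = wUN w i U := by
  intro L
  induction L with
  | nil =>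
    intro z hn hoff _
    refine ⟨∅, by simp, ?_⟩
    rw [wUN_empty]
    ext x
    by_cases hxi : x = i
    · rw [hxi]
      have hy : z (z.symm (w i)) = w i := z.apply_symm_apply (w i)
      by_cases hyi : z.symm (w i) = i
      · rw [hyi] at hy; exact hy
      · exfalso
        have := hoff _ hyi (List.not_mem_nil)
        rw [this] at hy
        exact hyi (w.injective hy)
    · exact hoff x hxi (List.not_mem_nil)
  | cons u T ih =>
    intro z hn hoff hle
    obtain ⟨hu, hiu, hT, huT⟩ := nice_head hn
    by_cases hzu : z u = w u
    · obtain ⟨U, hU, hzU⟩ := ih z (nice_tail hn)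
        (fun x hxi hxT => by
          by_cases hxu : x = u
          · rw [hxu]; exact hzu
          · exact hoff x hxi (fun hc => by
              rcases List.mem_cons.mp hc with h | h
              · exact hxu h
              · exact hxT h))
        (fun x hx => hle x (List.mem_cons_of_mem u hx))
      exact ⟨U, fun x hx => List.mem_cons_of_mem u (hU x hx), hzU⟩
    · have hzi : z i = w u := by
        have hy : z (z.symm (w u)) = w u := z.apply_symm_apply (w u)
        by_cases hyi : z.symm (w u) = i
        · rw [hyi] at hy; exact hy
        exfalso
        by_cases hyL : z.symm (w u) ∈ u :: T
        · rcases List.mem_cons.mp hyL with h | h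
          · rw [h] at hy; exact hzu hy
          · have h1 := hle _ (List.mem_cons_of_mem u h)
            have h2 := (hT _ h).2
            omega
        · have h3 := hoff _ hyi hyL
          rw [h3] at hy
          have h4 : z.symm (w u) = u := w.injective hy
          rw [h4] at hyL
          exact hyL (List.mem_cons_self)
      have hz'off : ∀ x, x ≠ i → x ∉ T → (z * Equiv.swap i u) x = w x := by
        intro x hxi hxT
        by_cases hxu : x = u
        · subst hxu
          rw [Equiv.Perm.mul_apply, Equiv.swap_apply_right]
          exact hzi
        · rw [Equiv.Perm.mul_apply, Equiv.swap_apply_of_ne_of_ne hxi hxu]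
          exact hoff x hxi (fun hc => by
            rcases List.mem_cons.mp hc with h | h
            · exact hxu h
            · exact hxT h)
      have hz'le : ∀ x ∈ T, (z * Equiv.swap i u) x ≤ w x := by
        intro x hx
        have h1 := (hT x hx).1
        rw [Equiv.Perm.mul_apply, Equiv.swap_apply_of_ne_of_ne (by omega) (by omega)]
        exact hle x (List.mem_cons_of_mem u hx)
      obtain ⟨U', hU', hzU'⟩ := ih (z * Equiv.swap i u) (nice_tail hn) hz'off hz'le
      have hunotU' : u ∉ U' := fun hc => huT (hU' u hc)
      refine ⟨insert u U', ?_, ?_⟩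
      · intro x hx
        rcases Finset.mem_insert.mp hx with hx0 | hx0
        · rw [hx0]; exact List.mem_cons_self
        · exact List.mem_cons_of_mem u (hU' x hx0)
      · rw [wUN_insert (fun x hx => (hT x (hU' x hx)).1) hunotU', ← hzU']
        rw [mul_assoc, Equiv.swap_mul_self, mul_one]

lemma bruhat_iff_dm {x y : Equiv.Perm ℕ} (hx : fsupp x) (hy : fsupp y) :
    bruhatLEN x y ↔ ∀ p q, dm x p q ≤ dm y p q := by
  constructor
  · exact fun h p q => bruhat_dm_le hx h p q
  · intro h
    obtain ⟨Nx, hNx⟩ := hx.sbdd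
    obtain ⟨Ny, hNy⟩ := hy.sbdd
    exact dcrit (N := max Nx Ny) (msr (max Nx Ny) x y) x y (hNx.mono (le_max_left _ _))
      (hNy.mono (le_max_right _ _)) h (le_refl _)

/-- Lemma 2.4(2): the Bruhat interval `[w, ∨Φ_i(w)]` is
`{w} ∪ {w_{U,i} : ∅ ≠ U ⊆ φ_i(w)}`. Here `φ_i(w)` is the set of `a` with
`(a, w(a))` a neighbor of `(i, w(i))`, `Φ_i(w) = {w t_{i,a} : a ∈ φ_i(w)}` is
assumed nonempty, and the join `∨Φ_i(w)` is the least upper bound of `Φ_i(w)`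
in Bruhat order. -/
theorem bruhat_interval_boolean
    (w : Equiv.Perm ℕ) (i : ℕ) (hw : fsupp w) (hne : ∃ a, isNbrN w i a) :
    ∃ v : Equiv.Perm ℕ,
      (∀ a, isNbrN w i a → bruhatLEN (w * Equiv.swap i a) v) ∧
      (∀ z : Equiv.Perm ℕ,
        (∀ a, isNbrN w i a → bruhatLEN (w * Equiv.swap i a) z) → bruhatLEN v z) ∧
      (∀ z : Equiv.Perm ℕ,
        (bruhatLEN w z ∧ bruhatLEN z v) ↔
          (z = w ∨ ∃ U : Finset ℕ, U.Nonempty ∧ (∀ a ∈ U, isNbrN w i a) ∧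
            z = wUN w i U)) := by
  classical
  obtain ⟨N₀, hN₀⟩ := hw.sbdd
  set K := max (max N₀ (i+1)) (w i) + 2 with hK
  have hs : sbdd K w := hN₀.mono (by omega)
  have hiK : i < K := by omega
  have hbound : ∀ a, isNbrN w i a → a < K := by
    intro a ha
    have h1 : sbdd (max N₀ (i+1)) w := hN₀.mono (by omega)
    have := nbr_bound h1 (by omega) ha
    omega
  set φF := (Finset.range K).filter (fun a => isNbrN w i a) with hφF
  have hmemφ : ∀ a, a ∈ φF ↔ isNbrN w i a := by
    intro a
    rw [hφF, Finset.mem_filter, Finset.mem_range]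
    exact ⟨fun h => h.2, fun h => ⟨hbound a h, h⟩⟩
  set Lp := φF.sort (· ≤ ·) with hLp
  have hLp_mem : ∀ a, a ∈ Lp ↔ isNbrN w i a := fun a =>
    (Finset.mem_sort (· ≤ · : ℕ → ℕ → Prop)).trans (hmemφ a)
  have hnice : nice w i Lp := ⟨(Finset.sortedLT_sort φF).pairwise, fun x hx => (hLp_mem x).mp hx⟩
  have hLpK : ∀ x ∈ Lp, x < K := fun x hx => hbound x ((hLp_mem x).mp hx)
  have hfv : fsupp (wUN w i φF) := by
    rw [wUN_eq_rL]
    exact fsupp_of_sbdd (rL_sbdd hs hiK hLpK)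
  have hwv : bruhatLEN w (wUN w i φF) := by
    rw [wUN_eq_rL]
    exact rL_chain hs hiK hnice hLpK
  have hdmv : ∀ p q, dm (wUN w i φF) p q = dm w p q + eL w i Lp p q := by
    rw [wUN_eq_rL]
    exact dm_rL hnice
  have hatom_eq : ∀ a : ℕ, w * Equiv.swap i a = rL w i [a] := fun a => by
    rw [rL_cons, rL_nil]
  have hatom_nice : ∀ a, isNbrN w i a → nice w i [a] := fun a ha =>
    ⟨List.pairwise_singleton _ _, fun x hx => by
      rw [List.mem_singleton.mp hx]; exact ha⟩
  have hatom_dm : ∀ a, isNbrN w i a →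
      ∀ p q, dm (w * Equiv.swap i a) p q = dm w p q + eL w i [a] p q := by
    intro a ha p q
    rw [hatom_eq a]
    exact dm_rL (hatom_nice a ha) p q
  have hatom_fs : ∀ a : ℕ, fsupp (w * Equiv.swap i a) := fun a => fsupp_mul_swap hw i a
  refine ⟨wUN w i φF, ?_, ?_, ?_⟩
  · -- (1) atoms are below v
    intro a ha
    rw [bruhat_iff_dm (hatom_fs a) hfv]
    intro p q
    rw [hatom_dm a ha p q, hdmv p q]
    have := eL_mono (w := w) (i := i)
      (fun x hx => (hLp_mem x).mpr (by rw [List.mem_singleton.mp hx]; exact ha)) p q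
    omega
  · -- (2) v is the least upper bound
    intro z hz
    obtain ⟨a₀, ha₀⟩ := hne
    have hfz : fsupp z := fsupp_bruhat (hz a₀ ha₀) (hatom_fs a₀)
    have hwz : ∀ p q, dm w p q ≤ dm z p q := by
      intro p q
      have h1 := hatom_dm a₀ ha₀ p q
      have h2 := bruhat_dm_le (hatom_fs a₀) (hz a₀ ha₀) p q
      omega
    rw [bruhat_iff_dm hfv hfz]
    intro p q
    rw [hdmv p q]
    by_cases hcond : i < p ∧ w i < q ∧ ∃ u ∈ Lp, p ≤ u ∧ q ≤ w u
    · obtain ⟨h1, h2, u, huLp, h3, h4⟩ := hcond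
      have hu := (hLp_mem u).mp huLp
      have he1 : eL w i [u] p q = 1 := by
        rw [eL, if_pos ⟨h1, h2, u, List.mem_singleton_self u, h3, h4⟩]
      have he2 : eL w i Lp p q ≤ 1 := by
        rw [eL]; split_ifs <;> omega
      have h5 := hatom_dm u hu p q
      have h6 := bruhat_dm_le (hatom_fs u) (hz u hu) p q
      omega
    · have he : eL w i Lp p q = 0 := by
        rw [eL, if_neg hcond]
      have := hwz p q
      omega
  · -- (3) interval description
    intro z
    constructor
    · rintro ⟨h1, h2⟩
      have hfz : fsupp z := fsupp_bruhat h1 hw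
      have hs1 : ∀ p q, dm w p q ≤ dm z p q := fun p q => bruhat_dm_le hw h1 p q
      have hs2 : ∀ p q, dm z p q ≤ dm w p q + eL w i Lp p q := by
        intro p q
        have := bruhat_dm_le hfz h2 p q
        rw [hdmv p q] at this
        exact this
      have fact1 : ∀ x q, q ≤ w x → eL w i Lp x q = 0 → q ≤ z x := by
        intro x q hq he
        have a1 := hs1 (x+1) q
        have a2 := hs2 x q
        rw [dm_succ, dm_succ, if_pos hq] at a1
        rw [he] at a2
        by_contra hc
        rw [if_neg hc] at a1
        omega
      have fact2 : ∀ x q, ¬ q ≤ w x → eL w i Lp (x+1) q = 0 → ¬ q ≤ z x := by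
        intro x q hq he hc
        have a1 := hs2 (x+1) q
        have a2 := hs1 x q
        rw [dm_succ, dm_succ, if_pos hc, if_neg hq, he] at a1
        omega
      have hev : ∀ p q, (¬ i < p ∨ ¬ w i < q ∨
          ∀ u, isNbrN w i u → p ≤ u → ¬ q ≤ w u) → eL w i Lp p q = 0 := by
        intro p q h
        rw [eL, if_neg]
        rintro ⟨c1, c2, u, hu, c3, c4⟩
        rcases h with h | h | h
        · exact h c1
        · exact h c2
        · exact h u ((hLp_mem u).mp hu) c3 c4
      have hoff : ∀ x, x ≠ i → x ∉ Lp → z x = w x := by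
        intro x hxi hxLp
        have hxnbr : ¬ isNbrN w i x := fun hc => hxLp ((hLp_mem x).mpr hc)
        have hge : w x ≤ z x := by
          apply fact1 x (w x) (le_refl _)
          apply hev
          by_cases hip : i < x
          · by_cases hwi : w i < w x
            · right; right
              intro u hu hxu hwu
              have := nbr_above hip hxnbr (le_of_lt hwi) u hu hxu
              omega
            · right; left; omega
          · left; omega
        have hle' : ¬ (w x + 1 ≤ z x) := by
          apply fact2 x (w x + 1) (by omega)
          apply hev
          by_cases hip : i < x
          · by_cases hwi : w i < w x + 1
            · right; right
              intro u hu hxu hwu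
              have := nbr_above hip hxnbr (by omega) u hu (by omega)
              omega
            · right; left; omega
          · left; omega
        omega
      have hleL : ∀ u ∈ Lp, z u ≤ w u := by
        intro u hu
        have hnu := (hLp_mem u).mp hu
        have h2' : ¬ (w u + 1 ≤ z u) := by
          apply fact2 u (w u + 1) (by omega)
          apply hev
          right; right
          intro u' hu' hge hwge
          have hlt : u < u' := by omega
          have := nbr_anti hnu hu' hlt
          omega
        omega
      obtain ⟨U, hUmem, hzU⟩ := cyc Lp z hnice hoff hleL
      rcases Finset.eq_empty_or_nonempty U with hUe | hUne
      · left
        rw [hzU, hUe, wUN_empty]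
      · right
        exact ⟨U, hUne, fun a ha => (hLp_mem a).mp (hUmem a ha), hzU⟩
    · rintro (rfl | ⟨U, hUne, hUnbr, rfl⟩)
      · exact ⟨Relation.ReflTransGen.refl, hwv⟩
      · have hniceU : nice w i (U.sort (· ≤ ·)) :=
          ⟨(Finset.sortedLT_sort U).pairwise, fun x hx => hUnbr x ((Finset.mem_sort (· ≤ · : ℕ → ℕ → Prop)).mp hx)⟩
        have hLuK : ∀ x ∈ U.sort (· ≤ ·), x < K := fun x hx =>
          hbound x (hUnbr x ((Finset.mem_sort (· ≤ · : ℕ → ℕ → Prop)).mp hx))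
        have h1 : bruhatLEN w (wUN w i U) := by
          rw [wUN_eq_rL]
          exact rL_chain hs hiK hniceU hLuK
        have hfU : fsupp (wUN w i U) := by
          rw [wUN_eq_rL]
          exact fsupp_of_sbdd (rL_sbdd hs hiK hLuK)
        have h2 : bruhatLEN (wUN w i U) (wUN w i φF) := by
          rw [bruhat_iff_dm hfU hfv]
          intro p q
          rw [hdmv p q, wUN_eq_rL, dm_rL hniceU p q]
          have := eL_mono (w := w) (i := i)
            (fun x hx => (hLp_mem x).mpr (hUnbr x ((Finset.mem_sort (· ≤ · : ℕ → ℕ → Prop)).mp hx))) p q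
          omega
        exact ⟨h1, h2⟩
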